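/- arXiv:2311.17885 — 3 statements merged into one kernel-verified Lean document; each statement's English description precedes it below -/
import Mathlib

section
/- Let C be a convex subset of a real vector space and L : C → ℝ a convex function. Then for any K ≥ 2 and any ŷ_1, …, ŷ_K ∈ C, the loss of the full ensemble average is bounded by the average of the leave-one-out ensemble losses: L((1/K)∑_{k=1}^K ŷ_k) ≤ (1/K)∑_{j=1}^K L((1/(K−1))∑_{k≠j} ŷ_k). -/
open scoped BigOperators

/-- monotonicity lemma. For a convex function `L` on a convex set `C`,
the loss of the full ensemble average is bounded by the average of the
leave-one-out ensemble losses. -/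
theorem ensemble_leave_one_out
    {E : Type*} [AddCommGroup E] [Module ℝ E]
    {C : Set E} (hC : Convex ℝ C)
    {L : E → ℝ} (hL : ConvexOn ℝ C L)
    {K : ℕ} (hK : 2 ≤ K)
    (y : Fin K → E) (hy : ∀ k, y k ∈ C) :
    L ((K : ℝ)⁻¹ • ∑ k, y k) ≤
      (K : ℝ)⁻¹ * ∑ j, L (((K : ℝ) - 1)⁻¹ • ∑ k ∈ Finset.univ.erase j, y k) := by
  have hKpos : (0:ℝ) < K := by positivity
  have hK1 : (0:ℝ) < (K:ℝ) - 1 := by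
    have : (2:ℝ) ≤ K := by exact_mod_cast hK
    linarith
  set S := ∑ k, y k with hS
  set z : Fin K → E := fun j => ((K : ℝ) - 1)⁻¹ • ∑ k ∈ Finset.univ.erase j, y k with hz
  have hcard : ∀ j : Fin K, ((Finset.univ.erase j).card : ℝ) = (K:ℝ) - 1 := by
    intro j
    rw [Finset.card_erase_of_mem (Finset.mem_univ j), Finset.card_univ, Fintype.card_fin]
    have h1 : 1 ≤ K := by omega
    push_cast [Nat.cast_sub h1]
    ring
  have hzC : ∀ j : Fin K, z j ∈ C := by
    intro j
    have hzj : z j = ∑ k ∈ Finset.univ.erase j, ((K:ℝ)-1)⁻¹ • y k :=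
      Finset.smul_sum
    rw [hzj]
    apply hC.sum_mem
    · intro i _; positivity
    · rw [Finset.sum_const, nsmul_eq_mul, hcard]
      field_simp
    · intro i _; exact hy i
  have herase : ∀ j : Fin K, ∑ k ∈ Finset.univ.erase j, y k = S - y j := by
    intro j
    rw [eq_sub_iff_add_eq, Finset.sum_erase_add _ _ (Finset.mem_univ j)]
  have hzsum : ∑ j, z j = S := by
    calc ∑ j, z j = ((K:ℝ)-1)⁻¹ • ∑ j, (S - y j) := by
          rw [Finset.smul_sum]; simp only [hz, herase]
      _ = ((K:ℝ)-1)⁻¹ • ((K:ℝ) • S - S) := by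
          rw [Finset.sum_sub_distrib, Finset.sum_const, Finset.card_univ, Fintype.card_fin,
            ← Nat.cast_smul_eq_nsmul ℝ, hS]
      _ = S := by
          rw [show (K:ℝ) • S - S = ((K:ℝ)-1) • S by rw [sub_smul, one_smul],
            smul_smul, inv_mul_cancel₀ hK1.ne', one_smul]
  have key := hL.map_sum_le (t := Finset.univ) (w := fun _ : Fin K => (K:ℝ)⁻¹) (p := z)
    (fun i _ => by positivity)
    (by rw [Finset.sum_const, Finset.card_univ, Fintype.card_fin, nsmul_eq_mul]
        field_simp)
    (fun i _ => hzC i)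
  have hrw : ∑ j, (K:ℝ)⁻¹ • z j = (K:ℝ)⁻¹ • S := by
    rw [← Finset.smul_sum, hzsum]
  rw [hrw] at key
  calc L ((K:ℝ)⁻¹ • S) ≤ ∑ j, (K:ℝ)⁻¹ * L (z j) := key
    _ = (K:ℝ)⁻¹ * ∑ j, L (z j) := by rw [Finset.mul_sum]
end

section
/- Let C be a convex subset of a real normed vector space with norm ‖·‖, let μ > 0, and let L : C → ℝ be μ-strongly convex. Then for any K ≥ 1 and any x_1, …, x_K ∈ C, writing x̄ = (1/K)∑_{j=1}^K x_j, one has the strengthened Jensen inequality L(x̄) ≤ (1/K)∑_{k=1}^K L(x_k) − μ·(1/K)∑_{k=1}^K ‖x_k − x̄‖². -/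
open scoped BigOperators

/-- strengthened Jensen inequality for a `μ`-strongly convex
function on a convex subset of a normed vector space. -/
theorem strong_convexity_jensen
    {E : Type*} [NormedAddCommGroup E] [NormedSpace ℝ E]
    {C : Set E} (hC : Convex ℝ C)
    {μ : ℝ} (hμ : 0 < μ)
    {L : E → ℝ}
    (hL : ∀ x ∈ C, ∀ y ∈ C, ∀ t ∈ Set.Icc (0 : ℝ) 1,
      L (t • x + (1 - t) • y) ≤ t * L x + (1 - t) * L y - μ * t * (1 - t) * ‖x - y‖ ^ 2)
    {K : ℕ} (hK : 1 ≤ K)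
    (x : Fin K → E) (hx : ∀ k, x k ∈ C) :
    L ((K : ℝ)⁻¹ • ∑ j, x j) ≤
      (K : ℝ)⁻¹ * ∑ k, L (x k)
        - μ * ((K : ℝ)⁻¹ * ∑ k, ‖x k - (K : ℝ)⁻¹ • ∑ j, x j‖ ^ 2) := by
  have hK0 : (0:ℝ) < (K:ℝ) := by exact_mod_cast Nat.lt_of_lt_of_le Nat.zero_lt_one hK
  have hKne : (K:ℝ) ≠ 0 := hK0.ne'
  set xb : E := (K : ℝ)⁻¹ • ∑ j, x j with hxb
  set A : ℝ := (K : ℝ)⁻¹ * ∑ k, ‖x k - xb‖ ^ 2 with hA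
  have hA0 : 0 ≤ A := by
    apply mul_nonneg (by positivity)
    exact Finset.sum_nonneg fun k _ => by positivity
  -- L is convex on C
  have hconv : ConvexOn ℝ C L := by
    refine ⟨hC, fun a ha b hb s u hs hu hsu => ?_⟩
    have hu' : u = 1 - s := by linarith
    subst hu'
    have := hL a ha b hb s ⟨hs, by linarith⟩
    simp only [smul_eq_mul]
    nlinarith [mul_nonneg (mul_nonneg hs hu) (sq_nonneg ‖a - b‖), hμ.le,
      mul_nonneg hμ.le (mul_nonneg (mul_nonneg hs hu) (sq_nonneg ‖a - b‖))]
  have hw0 : ∀ k ∈ Finset.univ (α := Fin K), (0:ℝ) ≤ (K:ℝ)⁻¹ := fun _ _ => by positivity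
  have hw1 : ∑ _k : Fin K, (K:ℝ)⁻¹ = 1 := by
    rw [Finset.sum_const, Finset.card_univ, Fintype.card_fin, nsmul_eq_mul]
    field_simp
  have hxbC : xb ∈ C := by
    rw [hxb, Finset.smul_sum]
    exact hC.sum_mem hw0 hw1 fun k _ => hx k
  set avgL : ℝ := (K : ℝ)⁻¹ * ∑ k, L (x k) with havgL
  -- key inequality for each t ∈ (0,1]
  have key : ∀ t ∈ Set.Ioc (0:ℝ) 1, L xb ≤ avgL - μ * (1 - t) * A := by
    intro t ht
    have ht0 : 0 < t := ht.1
    have ht1 : t ≤ 1 := ht.2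
    set z : Fin K → E := fun k => t • x k + (1 - t) • xb with hz
    have hzC : ∀ k, z k ∈ C := fun k =>
      hC (hx k) hxbC ht0.le (by linarith) (by ring)
    have hs1 : ∑ k : Fin K, (K:ℝ)⁻¹ • t • x k = t • xb := by
      simp only [hxb, Finset.smul_sum, smul_smul]
      exact Finset.sum_congr rfl fun k _ => by rw [mul_comm]
    have hs2 : ∑ _k : Fin K, (K:ℝ)⁻¹ • ((1-t) • xb) = (1-t) • xb := by
      rw [Finset.sum_const, Finset.card_univ, Fintype.card_fin,
        ← Nat.cast_smul_eq_nsmul ℝ, smul_smul, smul_smul]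
      congr 1
      field_simp
    have hmean : ∑ k, (K:ℝ)⁻¹ • z k = xb := by
      calc ∑ k, (K:ℝ)⁻¹ • z k
          = (∑ k, (K:ℝ)⁻¹ • t • x k) + ∑ _k : Fin K, (K:ℝ)⁻¹ • ((1-t) • xb) := by
            simp [hz, smul_add, Finset.sum_add_distrib]
        _ = t • xb + (1-t) • xb := by rw [hs1, hs2]
        _ = xb := by rw [← add_smul]; simp
    have hjensen : L xb ≤ ∑ k, (K:ℝ)⁻¹ * L (z k) := by
      rw [← hmean]
      exact hconv.map_sum_le hw0 hw1 fun k _ => hzC k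
    have hbound : ∀ k, L (z k) ≤ t * L (x k) + (1 - t) * L xb
        - μ * t * (1 - t) * ‖x k - xb‖ ^ 2 :=
      fun k => hL (x k) (hx k) xb hxbC t ⟨ht0.le, ht1⟩
    have hstep : ∑ k, (K:ℝ)⁻¹ * L (z k) ≤
        ∑ k, (K:ℝ)⁻¹ * (t * L (x k) + (1 - t) * L xb
          - μ * t * (1 - t) * ‖x k - xb‖ ^ 2) :=
      Finset.sum_le_sum fun k _ =>
        mul_le_mul_of_nonneg_left (hbound k) (by positivity)
    have hc : ∑ _k : Fin K, (K:ℝ)⁻¹ * ((1-t) * L xb) = (1-t) * L xb := by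
      rw [← Finset.sum_mul, hw1, one_mul]
    have goal_eq : ∑ k, (K:ℝ)⁻¹ * (t * L (x k) + (1 - t) * L xb
          - μ * t * (1 - t) * ‖x k - xb‖ ^ 2)
        = t * avgL + (1 - t) * L xb - μ * t * (1 - t) * A := by
      have expand : ∀ k : Fin K, (K:ℝ)⁻¹ * (t * L (x k) + (1 - t) * L xb
            - μ * t * (1 - t) * ‖x k - xb‖ ^ 2)
          = (t * ((K:ℝ)⁻¹ * L (x k)) + (K:ℝ)⁻¹ * ((1-t) * L xb))
            - μ * t * (1-t) * ((K:ℝ)⁻¹ * ‖x k - xb‖^2) := fun k => by ring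
      rw [Finset.sum_congr rfl fun k _ => expand k, Finset.sum_sub_distrib,
        Finset.sum_add_distrib, hc]
      simp only [← Finset.mul_sum]
      rfl
    have hfinal := hjensen.trans (hstep.trans_eq goal_eq)
    nlinarith
  -- limit t → 0⁺
  have htend : Filter.Tendsto (fun t : ℝ => avgL - μ * (1 - t) * A)
      (nhdsWithin 0 (Set.Ioc (0:ℝ) 1)) (nhds (avgL - μ * (1 - 0) * A)) := by
    apply Filter.Tendsto.mono_left _ nhdsWithin_le_nhds
    exact Continuous.tendsto (by continuity) 0
  have hne : (nhdsWithin (0:ℝ) (Set.Ioc (0:ℝ) 1)).NeBot := by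
    apply mem_closure_iff_nhdsWithin_neBot.mp
    rw [closure_Ioc one_ne_zero.symm]
    exact ⟨le_refl 0, zero_le_one⟩
  have := ge_of_tendsto htend (Filter.eventually_of_mem self_mem_nhdsWithin key)
  simpa using this
end

section
/- Let ŷ_1, …, ŷ_K (K ≥ 2) be exchangeable random vectors in ℝ^d with common covariance matrix Σ that is positive definite, and let ρ = tr(Cov(ŷ_1, ŷ_2))/tr(Σ). If L : ℝ^d → ℝ is μ-strongly convex (with respect to the Euclidean norm) and all expectations below exist, then E[L((1/K)∑_{k=1}^K ŷ_k)] ≤ E[L((1/(K−1))∑_{k=1}^{K−1} ŷ_k)] − (μ/(K(K−1)))·(1−ρ)·tr(Σ). -/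
open scoped BigOperators
open MeasureTheory ProbabilityTheory
open scoped InnerProductSpace


lemma ensembleAux_norm_combo {E : Type*} [NormedAddCommGroup E] [InnerProductSpace ℝ E]
    (x z : E) (t : ℝ) :
    ‖t • x + (1 - t) • z‖^2 = t * ‖x‖^2 + (1 - t) * ‖z‖^2 - t * (1 - t) * ‖x - z‖^2 := by
  have e : ∀ a : E, ‖a‖^2 = ⟪a,a⟫_ℝ := fun a => (real_inner_self_eq_norm_sq a).symm
  simp only [e, inner_add_left, inner_add_right, inner_sub_left, inner_sub_right,
    real_inner_smul_left, real_inner_smul_right, real_inner_comm x z]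
  ring

lemma ensembleAux_coord_le {d : ℕ} (v : EuclideanSpace ℝ (Fin d)) (ℓ : Fin d) : ‖v ℓ‖ ≤ ‖v‖ := by
  rw [EuclideanSpace.norm_eq, show ‖v ℓ‖ = Real.sqrt (‖v ℓ‖^2) from (Real.sqrt_sq (norm_nonneg _)).symm]
  exact Real.sqrt_le_sqrt
    (Finset.single_le_sum (f := fun i => ‖v i‖^2) (fun i _ => sq_nonneg _) (Finset.mem_univ ℓ))

lemma ensembleAux_transfer {Ω : Type*} [MeasureSpace Ω] {d K : ℕ}
    (y : ℕ → Ω → EuclideanSpace ℝ (Fin d))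
    (hmeas : ∀ k, Measurable (y k))
    (hexch : ∀ σ : Equiv.Perm (Fin K),
      Measure.map (fun ω => fun i : Fin K => y (σ i) ω) ℙ =
        Measure.map (fun ω => fun i : Fin K => y i ω) ℙ)
    (σ : Equiv.Perm (Fin K)) (F : (Fin K → EuclideanSpace ℝ (Fin d)) → ℝ)
    (hF : Continuous F) :
    ((∫ ω, F (fun i => y (σ i) ω)) = (∫ ω, F (fun i => y i ω))) ∧
    (Integrable (fun ω => F (fun i => y (σ i) ω)) ℙ ↔
      Integrable (fun ω => F (fun i => y i ω)) ℙ) := by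
  have h1 : Measurable (fun ω => fun i : Fin K => y (σ i) ω) :=
    measurable_pi_lambda _ fun i => hmeas _
  have h2 : Measurable (fun ω => fun i : Fin K => y i ω) :=
    measurable_pi_lambda _ fun i => hmeas _
  constructor
  · rw [← integral_map h1.aemeasurable hF.aestronglyMeasurable, hexch σ,
      integral_map h2.aemeasurable hF.aestronglyMeasurable]
  · have e1 := integrable_map_measure (f := fun ω => fun i : Fin K => y (σ i) ω) (μ := ℙ)
      hF.aestronglyMeasurable h1.aemeasurable
    have e2 := integrable_map_measure (f := fun ω => fun i : Fin K => y i ω) (μ := ℙ)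
      hF.aestronglyMeasurable h2.aemeasurable
    rw [hexch σ] at e1
    exact e1.symm.trans e2

section

variable {Ω : Type*} [MeasureSpace Ω] {d K : ℕ}
  (y : ℕ → Ω → EuclideanSpace ℝ (Fin d))

lemma ensembleAux_pair (hK : 2 ≤ K)
    (hmeas : ∀ k, Measurable (y k))
    (hexch : ∀ σ : Equiv.Perm (Fin K),
      Measure.map (fun ω => fun i : Fin K => y (σ i) ω) ℙ =
        Measure.map (fun ω => fun i : Fin K => y i ω) ℙ)
    (k l : ℕ) (hk : k < K) (hl : l < K) (hkl : k ≠ l) :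
    (∫ ω, ⟪y k ω, y l ω⟫_ℝ) = ∫ ω, ⟪y 0 ω, y 1 ω⟫_ℝ := by
  have h0 : 0 < K := by omega
  have h1 : 1 < K := by omega
  set i0 : Fin K := ⟨0, h0⟩
  set i1 : Fin K := ⟨1, h1⟩
  set kF : Fin K := ⟨k, hk⟩
  set lF : Fin K := ⟨l, hl⟩
  set τ₁ : Equiv.Perm (Fin K) := Equiv.swap i0 kF
  set j₀ : Fin K := τ₁ lF
  set τ₂ : Equiv.Perm (Fin K) := Equiv.swap i1 j₀
  set σ : Equiv.Perm (Fin K) := τ₂.trans τ₁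
  have h01 : i0 ≠ i1 := by simp [i0, i1, Fin.ext_iff]
  have hj0 : j₀ ≠ i0 := by
    intro h
    have : lF = kF := by
      have := congrArg τ₁ h
      rwa [Equiv.swap_apply_self, Equiv.swap_apply_left] at this
    have h4 : l = k := by simpa [lF, kF] using congrArg Fin.val this
    exact hkl h4.symm
  have hσ0 : σ i0 = kF := by
    have : τ₂ i0 = i0 := Equiv.swap_apply_of_ne_of_ne h01 (Ne.symm hj0)
    simp [σ, Equiv.trans_apply, this, τ₁, Equiv.swap_apply_left]
  have hσ1 : σ i1 = lF := by
    have h2 : τ₂ i1 = j₀ := Equiv.swap_apply_left _ _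
    have h3 : τ₁ j₀ = lF := Equiv.swap_apply_self _ _ _
    simp [σ, Equiv.trans_apply, h2, h3]
  have hcont : Continuous (fun v : Fin K → EuclideanSpace ℝ (Fin d) => ⟪v i0, v i1⟫_ℝ) :=
    (continuous_apply i0).inner (continuous_apply i1)
  have heq := (ensembleAux_transfer y hmeas hexch σ _ hcont).1
  simp only [hσ0, hσ1] at heq
  exact heq

lemma ensembleAux_diag (hK : 2 ≤ K)
    (hmeas : ∀ k, Measurable (y k))
    (hexch : ∀ σ : Equiv.Perm (Fin K),
      Measure.map (fun ω => fun i : Fin K => y (σ i) ω) ℙ =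
        Measure.map (fun ω => fun i : Fin K => y i ω) ℙ)
    (k : ℕ) (hk : k < K) :
    (∫ ω, ⟪y k ω, y k ω⟫_ℝ) = ∫ ω, ⟪y 0 ω, y 0 ω⟫_ℝ := by
  have h0 : 0 < K := by omega
  set i0 : Fin K := ⟨0, h0⟩
  set kF : Fin K := ⟨k, hk⟩
  set σ : Equiv.Perm (Fin K) := Equiv.swap i0 kF
  have hσ0 : σ i0 = kF := Equiv.swap_apply_left _ _
  have hcont : Continuous (fun v : Fin K → EuclideanSpace ℝ (Fin d) => ⟪v i0, v i0⟫_ℝ) :=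
    (continuous_apply i0).inner (continuous_apply i0)
  have heq := (ensembleAux_transfer y hmeas hexch σ _ hcont).1
  simp only [hσ0] at heq
  exact heq

lemma ensembleAux_mean (hK : 2 ≤ K)
    (hmeas : ∀ k, Measurable (y k))
    (hexch : ∀ σ : Equiv.Perm (Fin K),
      Measure.map (fun ω => fun i : Fin K => y (σ i) ω) ℙ =
        Measure.map (fun ω => fun i : Fin K => y i ω) ℙ)
    (ℓ : Fin d) :
    (∫ ω, y 1 ω ℓ) = ∫ ω, y 0 ω ℓ := by
  have h0 : 0 < K := by omega
  have h1 : 1 < K := by omega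
  set i0 : Fin K := ⟨0, h0⟩
  set i1 : Fin K := ⟨1, h1⟩
  set σ : Equiv.Perm (Fin K) := Equiv.swap i0 i1
  have hσ0 : σ i0 = i1 := Equiv.swap_apply_left _ _
  have hcont : Continuous (fun v : Fin K → EuclideanSpace ℝ (Fin d) => v i0 ℓ) :=
    (EuclideanSpace.proj ℓ).continuous.comp (continuous_apply i0)
  have heq := (ensembleAux_transfer y hmeas hexch σ _ hcont).1
  simp only [hσ0] at heq
  exact heq

end

lemma ensembleAux_loo {Ω : Type*} [MeasureSpace Ω] {d K : ℕ} (hK : 2 ≤ K)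
    (y : ℕ → Ω → EuclideanSpace ℝ (Fin d))
    (hmeas : ∀ k, Measurable (y k))
    (hexch : ∀ σ : Equiv.Perm (Fin K),
      Measure.map (fun ω => fun i : Fin K => y (σ i) ω) ℙ =
        Measure.map (fun ω => fun i : Fin K => y i ω) ℙ)
    (G : EuclideanSpace ℝ (Fin d) → ℝ) (hG : Continuous G) (c : ℝ)
    (j : ℕ) (hj : j < K) :
    ((∫ ω, G (c • ∑ k ∈ (Finset.range K).erase j, y k ω)) =
      ∫ ω, G (c • ∑ k ∈ Finset.range (K-1), y k ω)) ∧
    (Integrable (fun ω => G (c • ∑ k ∈ (Finset.range K).erase j, y k ω)) ℙ ↔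
      Integrable (fun ω => G (c • ∑ k ∈ Finset.range (K-1), y k ω)) ℙ) := by
  set lastF : Fin K := ⟨K-1, by omega⟩ with hlastF
  set jF : Fin K := ⟨j, hj⟩ with hjF
  set σ : Equiv.Perm (Fin K) := Equiv.swap jF lastF with hσdef
  set F : (Fin K → EuclideanSpace ℝ (Fin d)) → ℝ :=
    fun v => G (c • ∑ i ∈ Finset.univ.erase lastF, v i) with hFdef
  have hFc : Continuous F :=
    hG.comp ((continuous_finset_sum _ fun i _ => continuous_apply i).const_smul c)
  have hrhs : ∀ ω, (∑ i ∈ Finset.univ.erase lastF, y (i : ℕ) ω) =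
      ∑ k ∈ Finset.range (K-1), y k ω := by
    intro ω
    rw [Finset.sum_erase_eq_sub (Finset.mem_univ lastF),
      Fin.sum_univ_eq_sum_range (fun k => y k ω) K]
    have h2 : ∑ k ∈ Finset.range K, y k ω =
        ∑ k ∈ Finset.range (K-1), y k ω + y (K-1) ω := by
      conv_lhs => rw [show K = (K-1)+1 by omega]
      rw [Finset.sum_range_succ]
    rw [h2]
    show _ + _ - y ((K-1 : ℕ)) ω = _
    abel
  have hlhs : ∀ ω, (∑ i ∈ Finset.univ.erase lastF, y ((σ i : Fin K) : ℕ) ω) =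
      ∑ k ∈ (Finset.range K).erase j, y k ω := by
    intro ω
    rw [Finset.sum_erase_eq_sub (Finset.mem_univ lastF),
      Equiv.sum_comp σ (fun i : Fin K => y (i : ℕ) ω),
      Fin.sum_univ_eq_sum_range (fun k => y k ω) K,
      Finset.sum_erase_eq_sub (Finset.mem_range.mpr hj)]
    have : σ lastF = jF := Equiv.swap_apply_right _ _
    rw [this]
  obtain ⟨heq, hint⟩ := ensembleAux_transfer y hmeas hexch σ F hFc
  simp only [hFdef] at heq hint
  simp only [hlhs, hrhs] at heq hint
  exact ⟨heq, hint⟩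

/-- strict monotonicity of the expected ensemble loss for a
`μ`-strongly convex loss and an exchangeable ensemble with positive definite
covariance matrix. -/
theorem ensemble_strict_monotone_strongly_convex
    {Ω : Type*} [MeasureSpace Ω] [IsProbabilityMeasure (ℙ : Measure Ω)]
    {d K : ℕ} (hK : 2 ≤ K)
    (y : ℕ → Ω → EuclideanSpace ℝ (Fin d))
    (hmeas : ∀ k, Measurable (y k))
    (hexch : ∀ σ : Equiv.Perm (Fin K),
      Measure.map (fun ω => fun i : Fin K => y (σ i) ω) ℙ =
        Measure.map (fun ω => fun i : Fin K => y i ω) ℙ)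
    (hL2 : ∀ k, MemLp (y k) 2 ℙ)
    (m : EuclideanSpace ℝ (Fin d)) (hm : ∀ i, m i = ∫ ω, y 0 ω i)
    (S : Matrix (Fin d) (Fin d) ℝ)
    (hS : ∀ i j, S i j = ∫ ω, (y 0 ω i - m i) * (y 0 ω j - m j))
    (hSpos : S.PosDef)
    (Scross : Matrix (Fin d) (Fin d) ℝ)
    (hScross : ∀ i j, Scross i j = ∫ ω, (y 0 ω i - m i) * (y 1 ω j - m j))
    (ρ : ℝ) (hρ : ρ = Scross.trace / S.trace)
    {μ : ℝ} (hμ : 0 < μ)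
    {L : EuclideanSpace ℝ (Fin d) → ℝ}
    (hL : ∀ x z, ∀ t ∈ Set.Icc (0 : ℝ) 1,
      L (t • x + (1 - t) • z) ≤ t * L x + (1 - t) * L z - μ * t * (1 - t) * ‖x - z‖ ^ 2)
    (hint₁ : Integrable (fun ω => L ((K : ℝ)⁻¹ • ∑ k ∈ Finset.range K, y k ω)))
    (hint₂ : Integrable
      (fun ω => L (((K : ℝ) - 1)⁻¹ • ∑ k ∈ Finset.range (K - 1), y k ω))) :
    (∫ ω, L ((K : ℝ)⁻¹ • ∑ k ∈ Finset.range K, y k ω)) ≤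
      (∫ ω, L (((K : ℝ) - 1)⁻¹ • ∑ k ∈ Finset.range (K - 1), y k ω))
        - μ / ((K : ℝ) * ((K : ℝ) - 1)) * (1 - ρ) * S.trace := by
  have hK0 : (K : ℝ) ≠ 0 := by positivity
  have hK1 : (K : ℝ) - 1 ≠ 0 := by
    have : (2 : ℝ) ≤ (K : ℝ) := by exact_mod_cast hK
    linarith
  have hcast : ((K - 1 : ℕ) : ℝ) = (K : ℝ) - 1 := by
    have : 1 ≤ K := by omega
    push_cast [Nat.cast_sub this]
    ring
  -- coordinates are in L²
  have hcoordL2 : ∀ k ℓ, MemLp (fun ω => y k ω ℓ) 2 ℙ := by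
    intro k ℓ
    refine (hL2 k).of_le
      (((EuclideanSpace.proj ℓ).continuous.measurable.comp (hmeas k)).aestronglyMeasurable) ?_
    filter_upwards with ω
    exact ensembleAux_coord_le (y k ω) ℓ
  have hcoord_int : ∀ k ℓ, Integrable (fun ω => y k ω ℓ) ℙ := fun k ℓ =>
    (hcoordL2 k ℓ).integrable one_le_two
  have hprod_int : ∀ k l ℓ, Integrable (fun ω => y k ω ℓ * y l ω ℓ) ℙ := by
    intro k l ℓ
    haveI : ENNReal.HolderTriple 2 2 1 := ⟨by rw [inv_one, ENNReal.inv_two_add_inv_two]⟩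
    have h := (hcoordL2 l ℓ).smul (φ := fun ω => y k ω ℓ) (hcoordL2 k ℓ)
      (p := 2) (q := 2) (r := 1)
    exact memLp_one_iff_integrable.mp h
  have hinner_eq : ∀ (k l : ℕ) (ω : Ω), ⟪y k ω, y l ω⟫_ℝ = ∑ ℓ, y k ω ℓ * y l ω ℓ := by
    intro k l ω
    simp [PiLp.inner_apply, RCLike.inner_apply, conj_trivial]
    exact Finset.sum_congr rfl fun _ _ => mul_comm _ _
  have hmul : ∀ k l, Integrable (fun ω => ⟪y k ω, y l ω⟫_ℝ) ℙ := by
    intro k l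
    simp only [hinner_eq]
    exact integrable_finset_sum _ fun ℓ _ => hprod_int k l ℓ
  set A : ℝ := ∫ ω, ⟪y 0 ω, y 1 ω⟫_ℝ with hAdef
  set B : ℝ := ∫ ω, ⟪y 0 ω, y 0 ω⟫_ℝ with hBdef
  have hpairval : ∀ k ∈ Finset.range K, ∀ l ∈ Finset.range K,
      (∫ ω, ⟪y k ω, y l ω⟫_ℝ) = if k = l then B else A := by
    intro k hk l hl
    by_cases hkl : k = l
    · subst hkl
      rw [if_pos rfl]
      exact ensembleAux_diag y hK hmeas hexch k (Finset.mem_range.mp hk)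
    · rw [if_neg hkl]
      exact ensembleAux_pair y hK hmeas hexch k l (Finset.mem_range.mp hk)
        (Finset.mem_range.mp hl) hkl
  -- pointwise expansion of squared norms of scaled sums
  have hpt : ∀ (c : ℝ) (n : ℕ) (ω : Ω), ‖c • ∑ k ∈ Finset.range n, y k ω‖^2 =
      c^2 * ∑ k ∈ Finset.range n, ∑ l ∈ Finset.range n, ⟪y k ω, y l ω⟫_ℝ := by
    intro c n ω
    rw [norm_smul, mul_pow, Real.norm_eq_abs, sq_abs,
      ← real_inner_self_eq_norm_sq]
    congr 1
    rw [sum_inner]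
    exact Finset.sum_congr rfl fun k _ => inner_sum _ _ _
  have hmomint : ∀ (c : ℝ) (n : ℕ),
      Integrable (fun ω => ‖c • ∑ k ∈ Finset.range n, y k ω‖^2) ℙ := by
    intro c n
    simp only [hpt]
    exact (integrable_finset_sum _ fun k _ =>
      integrable_finset_sum _ fun l _ => hmul k l).const_mul _
  have hmomval : ∀ (c : ℝ) (n : ℕ), n ≤ K →
      (∫ ω, ‖c • ∑ k ∈ Finset.range n, y k ω‖^2) =
        c^2 * ((n : ℝ) * B + (n : ℝ) * ((n : ℝ) - 1) * A) := by
    intro c n hn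
    simp only [hpt]
    rw [integral_const_mul]
    congr 1
    rw [integral_finset_sum _ fun k _ => integrable_finset_sum _ fun l _ => hmul k l]
    have hrow : ∀ k ∈ Finset.range n,
        (∫ ω, ∑ l ∈ Finset.range n, ⟪y k ω, y l ω⟫_ℝ) = B + ((n : ℝ) - 1) * A := by
      intro k hk
      rw [integral_finset_sum _ fun l _ => hmul k l]
      have h1 : ∀ l ∈ Finset.range n, (∫ ω, ⟪y k ω, y l ω⟫_ℝ) =
          A + (if k = l then B - A else 0) := by
        intro l hl
        rw [hpairval k (Finset.mem_range.mpr (lt_of_lt_of_le (Finset.mem_range.mp hk) hn))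
          l (Finset.mem_range.mpr (lt_of_lt_of_le (Finset.mem_range.mp hl) hn))]
        by_cases h : k = l <;> simp [h]
      rw [Finset.sum_congr rfl h1, Finset.sum_add_distrib, Finset.sum_const,
        Finset.card_range, Finset.sum_ite_eq, if_pos hk, nsmul_eq_mul]
      ring
    rw [Finset.sum_congr rfl hrow, Finset.sum_const, Finset.card_range, nsmul_eq_mul]
    ring
  -- convexity of L - μ‖·‖²
  set g : EuclideanSpace ℝ (Fin d) → ℝ := fun x => L x - μ * ‖x‖^2 with hgdef
  have hgconv : ConvexOn ℝ Set.univ g := by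
    refine ⟨convex_univ, fun x _ z _ a b ha hb hab => ?_⟩
    have hb' : b = 1 - a := by linarith
    subst hb'
    have h1 := hL x z a ⟨ha, by linarith⟩
    have h2 := ensembleAux_norm_combo x z a
    have h3 : a * ‖x‖^2 + (1-a) * ‖z‖^2 - ‖a • x + (1-a) • z‖^2 = a * (1-a) * ‖x - z‖^2 := by
      rw [h2]; ring
    have h4 := congrArg (fun t => μ * t) h3
    simp only [hgdef, smul_eq_mul]
    nlinarith [h1, h4]
  have hgcont : Continuous g :=
    continuousOn_univ.mp (hgconv.continuousOn isOpen_univ)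
  -- leave-one-out facts
  have hloo := fun (j : ℕ) (hj : j < K) =>
    ensembleAux_loo hK y hmeas hexch g hgcont ((K : ℝ) - 1)⁻¹ j hj
  have hgint' : Integrable (fun ω => g (((K : ℝ) - 1)⁻¹ • ∑ k ∈ Finset.range (K-1), y k ω)) ℙ := by
    simp only [hgdef]
    exact hint₂.sub ((hmomint _ _).const_mul μ)
  have hgintK : Integrable (fun ω => g ((K : ℝ)⁻¹ • ∑ k ∈ Finset.range K, y k ω)) ℙ := by
    simp only [hgdef]
    exact hint₁.sub ((hmomint _ _).const_mul μ)
  have hlooint : ∀ j ∈ Finset.range K,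
      Integrable (fun ω => g (((K : ℝ) - 1)⁻¹ • ∑ k ∈ (Finset.range K).erase j, y k ω)) ℙ :=
    fun j hj => ((hloo j (Finset.mem_range.mp hj)).2).mpr hgint'
  -- splitting of the full mean into leave-one-out means
  have hsplit : ∀ ω, (K : ℝ)⁻¹ • ∑ k ∈ Finset.range K, y k ω =
      ∑ j ∈ Finset.range K, (K : ℝ)⁻¹ •
        (((K : ℝ) - 1)⁻¹ • ∑ k ∈ (Finset.range K).erase j, y k ω) := by
    intro ω
    have h1 : ∀ j ∈ Finset.range K, (K : ℝ)⁻¹ •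
        (((K : ℝ) - 1)⁻¹ • ∑ k ∈ (Finset.range K).erase j, y k ω) =
        ((K : ℝ)⁻¹ * ((K : ℝ) - 1)⁻¹) • (∑ k ∈ Finset.range K, y k ω) -
          ((K : ℝ)⁻¹ * ((K : ℝ) - 1)⁻¹) • y j ω := by
      intro j hj
      rw [Finset.sum_erase_eq_sub hj, smul_smul, smul_sub]
    rw [Finset.sum_congr rfl h1, Finset.sum_sub_distrib, Finset.sum_const,
      Finset.card_range, ← Finset.smul_sum, ← Nat.cast_smul_eq_nsmul ℝ, smul_smul, ← sub_smul]
    congr 1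
    field_simp
    all_goals ring
  have hjensen : ∀ ω, g ((K : ℝ)⁻¹ • ∑ k ∈ Finset.range K, y k ω) ≤
      ∑ j ∈ Finset.range K, (K : ℝ)⁻¹ *
        g (((K : ℝ) - 1)⁻¹ • ∑ k ∈ (Finset.range K).erase j, y k ω) := by
    intro ω
    rw [hsplit ω]
    refine hgconv.map_sum_le (fun j _ => by positivity) ?_ (fun j _ => Set.mem_univ _)
    rw [Finset.sum_const, Finset.card_range, nsmul_eq_mul]
    field_simp
  have hKey : (∫ ω, g ((K : ℝ)⁻¹ • ∑ k ∈ Finset.range K, y k ω)) ≤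
      ∫ ω, g (((K : ℝ) - 1)⁻¹ • ∑ k ∈ Finset.range (K-1), y k ω) := by
    have hintR : Integrable (fun ω => ∑ j ∈ Finset.range K, (K : ℝ)⁻¹ *
        g (((K : ℝ) - 1)⁻¹ • ∑ k ∈ (Finset.range K).erase j, y k ω)) ℙ :=
      integrable_finset_sum _ fun j hj => (hlooint j hj).const_mul _
    calc (∫ ω, g ((K : ℝ)⁻¹ • ∑ k ∈ Finset.range K, y k ω))
        ≤ ∫ ω, ∑ j ∈ Finset.range K, (K : ℝ)⁻¹ *
            g (((K : ℝ) - 1)⁻¹ • ∑ k ∈ (Finset.range K).erase j, y k ω) :=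
          integral_mono hgintK hintR hjensen
      _ = ∑ j ∈ Finset.range K, ∫ ω, (K : ℝ)⁻¹ *
            g (((K : ℝ) - 1)⁻¹ • ∑ k ∈ (Finset.range K).erase j, y k ω) :=
          integral_finset_sum _ fun j hj => (hlooint j hj).const_mul _
      _ = ∑ j ∈ Finset.range K, (K : ℝ)⁻¹ *
            ∫ ω, g (((K : ℝ) - 1)⁻¹ • ∑ k ∈ (Finset.range K).erase j, y k ω) :=
          Finset.sum_congr rfl fun j hj => integral_const_mul _ _
      _ = ∑ j ∈ Finset.range K, (K : ℝ)⁻¹ *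
            ∫ ω, g (((K : ℝ) - 1)⁻¹ • ∑ k ∈ Finset.range (K-1), y k ω) :=
          Finset.sum_congr rfl fun j hj => by rw [(hloo j (Finset.mem_range.mp hj)).1]
      _ = ∫ ω, g (((K : ℝ) - 1)⁻¹ • ∑ k ∈ Finset.range (K-1), y k ω) := by
          rw [Finset.sum_const, Finset.card_range, nsmul_eq_mul, ← mul_assoc,
            mul_inv_cancel₀ hK0, one_mul]
  -- moments of the two ensemble means
  have hQK : (∫ ω, ‖(K : ℝ)⁻¹ • ∑ k ∈ Finset.range K, y k ω‖^2) =
      ((K : ℝ)⁻¹)^2 * ((K : ℝ) * B + (K : ℝ) * ((K : ℝ) - 1) * A) := hmomval _ K le_rfl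
  have hQ' : (∫ ω, ‖((K : ℝ) - 1)⁻¹ • ∑ k ∈ Finset.range (K-1), y k ω‖^2) =
      (((K : ℝ) - 1)⁻¹)^2 * (((K : ℝ) - 1) * B + ((K : ℝ) - 1) * (((K : ℝ) - 1) - 1) * A) := by
    have := hmomval ((K : ℝ) - 1)⁻¹ (K-1) (by omega)
    rwa [hcast] at this
  -- split the g-integrals
  have hgsplitK : (∫ ω, g ((K : ℝ)⁻¹ • ∑ k ∈ Finset.range K, y k ω)) =
      (∫ ω, L ((K : ℝ)⁻¹ • ∑ k ∈ Finset.range K, y k ω)) -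
        μ * ∫ ω, ‖(K : ℝ)⁻¹ • ∑ k ∈ Finset.range K, y k ω‖^2 := by
    simp only [hgdef]
    rw [integral_sub hint₁ ((hmomint _ _).const_mul μ), integral_const_mul]
  have hgsplit' : (∫ ω, g (((K : ℝ) - 1)⁻¹ • ∑ k ∈ Finset.range (K-1), y k ω)) =
      (∫ ω, L (((K : ℝ) - 1)⁻¹ • ∑ k ∈ Finset.range (K-1), y k ω)) -
        μ * ∫ ω, ‖((K : ℝ) - 1)⁻¹ • ∑ k ∈ Finset.range (K-1), y k ω‖^2 := by
    simp only [hgdef]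
    rw [integral_sub hint₂ ((hmomint _ _).const_mul μ), integral_const_mul]
  -- trace identities
  have hm1 : ∀ ℓ, (∫ ω, y 1 ω ℓ) = m ℓ := fun ℓ =>
    (ensembleAux_mean y hK hmeas hexch ℓ).trans (hm ℓ).symm
  have hm0 : ∀ ℓ, (∫ ω, y 0 ω ℓ) = m ℓ := fun ℓ => (hm ℓ).symm
  have hBsum : B = ∑ ℓ, ∫ ω, y 0 ω ℓ * y 0 ω ℓ := by
    rw [hBdef]
    simp only [hinner_eq]
    exact integral_finset_sum _ fun ℓ _ => hprod_int 0 0 ℓ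
  have hAsum : A = ∑ ℓ, ∫ ω, y 0 ω ℓ * y 1 ω ℓ := by
    rw [hAdef]
    simp only [hinner_eq]
    exact integral_finset_sum _ fun ℓ _ => hprod_int 0 1 ℓ
  have hStr : S.trace = B - ∑ ℓ, m ℓ * m ℓ := by
    have hterm : ∀ ℓ : Fin d, S ℓ ℓ = (∫ ω, y 0 ω ℓ * y 0 ω ℓ) - m ℓ * m ℓ := by
      intro ℓ
      rw [hS ℓ ℓ]
      have hexp : (fun ω => (y 0 ω ℓ - m ℓ) * (y 0 ω ℓ - m ℓ)) =
          fun ω => y 0 ω ℓ * y 0 ω ℓ - ((2 * m ℓ) * y 0 ω ℓ - m ℓ * m ℓ) := by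
        funext ω; ring
      have hi1 : Integrable (fun ω => (2 * m ℓ) * y 0 ω ℓ - m ℓ * m ℓ) ℙ :=
        ((hcoord_int 0 ℓ).const_mul _).sub (integrable_const _)
      rw [hexp, integral_sub (hprod_int 0 0 ℓ) hi1,
        integral_sub ((hcoord_int 0 ℓ).const_mul _) (integrable_const _),
        integral_const_mul, integral_const, hm0 ℓ]
      simp [measure_univ]
      ring
    rw [Matrix.trace, hBsum, ← Finset.sum_sub_distrib]
    exact Finset.sum_congr rfl fun ℓ _ => hterm ℓ
  have hCtr : Scross.trace = A - ∑ ℓ, m ℓ * m ℓ := by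
    have hterm : ∀ ℓ : Fin d, Scross ℓ ℓ = (∫ ω, y 0 ω ℓ * y 1 ω ℓ) - m ℓ * m ℓ := by
      intro ℓ
      rw [hScross ℓ ℓ]
      have hexp : (fun ω => (y 0 ω ℓ - m ℓ) * (y 1 ω ℓ - m ℓ)) =
          fun ω => y 0 ω ℓ * y 1 ω ℓ - (m ℓ * y 0 ω ℓ + (m ℓ * y 1 ω ℓ - m ℓ * m ℓ)) := by
        funext ω; ring
      have hi1 : Integrable (fun ω => m ℓ * y 1 ω ℓ - m ℓ * m ℓ) ℙ :=
        ((hcoord_int 1 ℓ).const_mul _).sub (integrable_const _)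
      have hi2 : Integrable (fun ω => m ℓ * y 0 ω ℓ + (m ℓ * y 1 ω ℓ - m ℓ * m ℓ)) ℙ :=
        ((hcoord_int 0 ℓ).const_mul _).add hi1
      rw [hexp, integral_sub (hprod_int 0 1 ℓ) hi2,
        integral_add ((hcoord_int 0 ℓ).const_mul _) hi1,
        integral_sub ((hcoord_int 1 ℓ).const_mul _) (integrable_const _),
        integral_const_mul, integral_const_mul, integral_const, hm0 ℓ, hm1 ℓ]
      simp [measure_univ]
      all_goals ring
    rw [Matrix.trace, hAsum, ← Finset.sum_sub_distrib]
    exact Finset.sum_congr rfl fun ℓ _ => hterm ℓ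
  have hBA : S.trace - Scross.trace = B - A := by rw [hStr, hCtr]; ring
  have hρtr : (1 - ρ) * S.trace = B - A := by
    rcases eq_or_ne S.trace 0 with h0 | h0
    · have hd : d = 0 := by
        by_contra hd
        have hne : Nonempty (Fin d) := ⟨⟨0, Nat.pos_of_ne_zero hd⟩⟩
        have hdiag : ∀ i : Fin d, 0 < S i i := by
          intro i
          have hx : (Pi.single i 1 : Fin d → ℝ) ≠ 0 := by
            intro h
            have := congrFun h i
            simp [Pi.single_eq_same] at this
          exact hSpos.diag_pos
        have : 0 < S.trace := Finset.sum_pos (fun i _ => hdiag i) Finset.univ_nonempty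
        exact absurd h0 this.ne'
      subst hd
      have h1 : S.trace = 0 := by simp [Matrix.trace]
      have h2 : Scross.trace = 0 := by simp [Matrix.trace]
      have h3 : B - A = 0 := by rw [← hBA, h1, h2]; ring
      rw [h1, h3, mul_zero]
    · rw [hρ]
      rw [sub_mul, one_mul, div_mul_cancel₀ _ h0]
      exact hBA
  -- final arithmetic
  have hmain : (∫ ω, L ((K : ℝ)⁻¹ • ∑ k ∈ Finset.range K, y k ω)) -
      μ * ∫ ω, ‖(K : ℝ)⁻¹ • ∑ k ∈ Finset.range K, y k ω‖^2 ≤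
      (∫ ω, L (((K : ℝ) - 1)⁻¹ • ∑ k ∈ Finset.range (K-1), y k ω)) -
      μ * ∫ ω, ‖((K : ℝ) - 1)⁻¹ • ∑ k ∈ Finset.range (K-1), y k ω‖^2 := by
    rw [← hgsplitK, ← hgsplit']
    exact hKey
  have harith : μ / ((K : ℝ) * ((K : ℝ) - 1)) * (1 - ρ) * S.trace =
      μ * (∫ ω, ‖((K : ℝ) - 1)⁻¹ • ∑ k ∈ Finset.range (K-1), y k ω‖^2) -
      μ * ∫ ω, ‖(K : ℝ)⁻¹ • ∑ k ∈ Finset.range K, y k ω‖^2 := by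
    rw [hQK, hQ', mul_assoc, hρtr]
    field_simp
    ring
  have hfinal : (K : ℕ) - 1 = K - 1 := rfl
  linarith [hmain]
end
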